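/- For every n ≥ 2, the set A = {1, 3, 5, ..., 2n-1} ∪ {2n-2, 2n} ⊆ {1, ..., 2n} has cardinality n + 2 (for n ≥ 2) and contains no complete set of six pairwise sums of four distinct integers; that is, there do not exist distinct integers b₁, b₂, b₃, b₄ with bᵢ + bⱼ ∈ A for all 1 ≤ i < j ≤ 4. -/
import Mathlib

theorem stmt_5 (n : ℕ) (hn : 2 ≤ n) :
    (((Finset.Icc (1 : ℤ) (2 * (n : ℤ))).filter (fun x => Odd x) ∪
        {2 * (n : ℤ) - 2, 2 * (n : ℤ)}).card = n + 2) ∧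
    ¬ ∃ b : Fin 4 → ℤ, Function.Injective b ∧
      ∀ i j : Fin 4, i < j →
        b i + b j ∈ (Finset.Icc (1 : ℤ) (2 * (n : ℤ))).filter (fun x => Odd x) ∪
          {2 * (n : ℤ) - 2, 2 * (n : ℤ)} := by
  constructor
  · have himg : (Finset.Icc (1 : ℤ) (2 * (n : ℤ))).filter (fun x => Odd x) =
        (Finset.range n).image (fun k : ℕ => (2 * (k : ℤ) + 1)) := by
      ext x
      simp only [Finset.mem_filter, Finset.mem_Icc, Finset.mem_image, Finset.mem_range,
        Int.odd_iff]
      constructor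
      · rintro ⟨⟨h1, h2⟩, h3⟩
        refine ⟨((x - 1) / 2).toNat, by omega, by omega⟩
      · rintro ⟨k, hk, rfl⟩
        omega
    have hdisj : Disjoint ((Finset.Icc (1 : ℤ) (2 * (n : ℤ))).filter (fun x => Odd x))
        ({2 * (n : ℤ) - 2, 2 * (n : ℤ)} : Finset ℤ) := by
      rw [Finset.disjoint_left]
      intro a ha hb
      simp only [Finset.mem_filter, Int.odd_iff, Finset.mem_insert, Finset.mem_singleton] at ha hb
      omega
    rw [Finset.card_union_of_disjoint hdisj, himg,
      Finset.card_image_of_injective _ (fun a b h => by omega), Finset.card_range]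
    have : ((2 * (n : ℤ) - 2) : ℤ) ≠ 2 * (n : ℤ) := by omega
    rw [Finset.card_insert_of_notMem (by simpa using this), Finset.card_singleton]
  · rintro ⟨b, hinj, H⟩
    have h01 := H 0 1 (by decide)
    have h02 := H 0 2 (by decide)
    have h03 := H 0 3 (by decide)
    have h12 := H 1 2 (by decide)
    have h13 := H 1 3 (by decide)
    have h23 := H 2 3 (by decide)
    simp only [Finset.mem_union, Finset.mem_filter, Finset.mem_Icc, Finset.mem_insert,
      Finset.mem_singleton, Int.odd_iff] at h01 h02 h03 h12 h13 h23
    have ne01 : b 0 ≠ b 1 := hinj.ne (by decide)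
    have ne02 : b 0 ≠ b 2 := hinj.ne (by decide)
    have ne03 : b 0 ≠ b 3 := hinj.ne (by decide)
    have ne12 : b 1 ≠ b 2 := hinj.ne (by decide)
    have ne13 : b 1 ≠ b 3 := hinj.ne (by decide)
    have ne23 : b 2 ≠ b 3 := hinj.ne (by decide)
    omega
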